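/- The three-qubit Mølmer–Sørensen gate U_{X²}(π/2) := exp(−i(π/8)(X⊗I₂⊗I₂ + I₂⊗X⊗I₂ + I₂⊗I₂⊗X)²), an 8×8 unitary on ℂ^2 ⊗ ℂ^4 (control qubit first), factors as U_{X²}(π/2) = (I₂ ⊗ U''_X)(I₂ ⊗ Π₋ + X ⊗ Π₊), where Π_± = (I₄ ± X⊗X)/2 are the orthogonal projectors onto the ±1 eigenspaces of X⊗X on the two system qubits, and U''_X = (1/2) e^{−iπ/8} · M_X with M_X the 4×4 matrix having all diagonal entries equal to 1 and all off-diagonal entries equal to −1. -/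

import Mathlib

open Matrix
open Kronecker

/-- Pauli X. -/
def PX : Matrix (Fin 2) (Fin 2) ℂ := !![0, 1; 1, 0]

/-- The collective spin operator `S_x = X₁ + X₂ + X₃` on three qubits
(control qubit first). -/
def Sx3 : Matrix (Fin 2 × (Fin 2 × Fin 2)) (Fin 2 × (Fin 2 × Fin 2)) ℂ :=
  PX ⊗ₖ ((1 : Matrix (Fin 2) (Fin 2) ℂ) ⊗ₖ (1 : Matrix (Fin 2) (Fin 2) ℂ))
    + (1 : Matrix (Fin 2) (Fin 2) ℂ) ⊗ₖ (PX ⊗ₖ (1 : Matrix (Fin 2) (Fin 2) ℂ))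
    + (1 : Matrix (Fin 2) (Fin 2) ℂ) ⊗ₖ ((1 : Matrix (Fin 2) (Fin 2) ℂ) ⊗ₖ PX)

/-- The three-qubit Mølmer–Sørensen gate `U_{X²}(π/2) = exp(−i(π/8) S_x²)`. -/
noncomputable def UX2 : Matrix (Fin 2 × (Fin 2 × Fin 2)) (Fin 2 × (Fin 2 × Fin 2)) ℂ :=
  NormedSpace.exp ((-(Complex.I) * (Real.pi / 8)) • (Sx3 * Sx3))

/-- The projectors onto the `±1` eigenspaces of `X⊗X` on the two system qubits. -/
noncomputable def ProjXp : Matrix (Fin 2 × Fin 2) (Fin 2 × Fin 2) ℂ :=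
  ((2 : ℂ)⁻¹) • ((1 : Matrix (Fin 2 × Fin 2) (Fin 2 × Fin 2) ℂ) + PX ⊗ₖ PX)

noncomputable def ProjXm : Matrix (Fin 2 × Fin 2) (Fin 2 × Fin 2) ℂ :=
  ((2 : ℂ)⁻¹) • ((1 : Matrix (Fin 2 × Fin 2) (Fin 2 × Fin 2) ℂ) - PX ⊗ₖ PX)

/-- The 4×4 matrix with diagonal entries `1` and off-diagonal entries `−1`. -/
def MX : Matrix (Fin 2 × Fin 2) (Fin 2 × Fin 2) ℂ :=
  Matrix.of fun p q => if p = q then 1 else -1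

/-- The residual unitary `U''_X = (1/2) e^{−iπ/8} M_X`. -/
noncomputable def UX'' : Matrix (Fin 2 × Fin 2) (Fin 2 × Fin 2) ℂ :=
  ((2 : ℂ)⁻¹ * Complex.exp (-(Complex.I) * (Real.pi / 8))) • MX

/- ===== auxiliary development ===== -/

def hMat : Matrix (Fin 2) (Fin 2) ℂ := !![1, 1; 1, -1]

noncomputable def Vmat : Matrix (Fin 2 × (Fin 2 × Fin 2)) (Fin 2 × (Fin 2 × Fin 2)) ℂ :=
  hMat ⊗ₖ (hMat ⊗ₖ hMat)

def zfun : Fin 2 → ℂ := ![1, -1]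

noncomputable def Dz : Matrix (Fin 2) (Fin 2) ℂ := diagonal zfun

lemma hsq : hMat * hMat = (2 : ℂ) • 1 := by
  ext i j
  fin_cases i <;> fin_cases j <;>
    simp [hMat, Matrix.mul_apply, Fin.sum_univ_two, Matrix.one_apply] <;> norm_num

lemma hXh : PX * hMat = hMat * Dz := by
  ext i j
  fin_cases i <;> fin_cases j <;>
    simp [PX, hMat, Dz, zfun, Matrix.mul_apply, Fin.sum_univ_two, Matrix.diagonal_apply]

lemma hVV : Vmat * Vmat = (8 : ℂ) • 1 := by
  simp only [Vmat, ← Matrix.mul_kronecker_mul, hsq, Matrix.smul_kronecker,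
    Matrix.kronecker_smul, Matrix.one_kronecker_one, smul_smul]
  norm_num

lemma hid : Vmat * ((8 : ℂ)⁻¹ • Vmat) = 1 := by
  rw [Matrix.mul_smul, hVV, smul_smul]; norm_num

lemma hid' : ((8 : ℂ)⁻¹ • Vmat) * Vmat = 1 := by
  rw [Matrix.smul_mul, hVV, smul_smul]; norm_num

noncomputable def Vu : (Matrix (Fin 2 × (Fin 2 × Fin 2)) (Fin 2 × (Fin 2 × Fin 2)) ℂ)ˣ :=
  ⟨Vmat, (8 : ℂ)⁻¹ • Vmat, hid, hid'⟩

noncomputable def wsum : Fin 2 × (Fin 2 × Fin 2) → ℂ :=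
  fun p => zfun p.1 + zfun p.2.1 + zfun p.2.2

noncomputable def Dsum : Matrix (Fin 2 × (Fin 2 × Fin 2)) (Fin 2 × (Fin 2 × Fin 2)) ℂ :=
  diagonal wsum

lemma kron3_diag (a b c : Fin 2 → ℂ) :
    diagonal a ⊗ₖ (diagonal b ⊗ₖ diagonal c)
      = diagonal (fun p : Fin 2 × (Fin 2 × Fin 2) => a p.1 * (b p.2.1 * c p.2.2)) := by
  rw [Matrix.diagonal_kronecker_diagonal, Matrix.diagonal_kronecker_diagonal]

lemma one_eq_diag : (1 : Matrix (Fin 2) (Fin 2) ℂ) = diagonal (fun _ => 1) :=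
  (Matrix.diagonal_one).symm


lemma hDsum :
    Dz ⊗ₖ ((1 : Matrix (Fin 2) (Fin 2) ℂ) ⊗ₖ 1)
      + (1 : Matrix (Fin 2) (Fin 2) ℂ) ⊗ₖ (Dz ⊗ₖ 1)
      + (1 : Matrix (Fin 2) (Fin 2) ℂ) ⊗ₖ ((1 : Matrix (Fin 2) (Fin 2) ℂ) ⊗ₖ Dz) = Dsum := by
  rw [one_eq_diag]
  simp only [Dz, kron3_diag, Dsum, Matrix.diagonal_add]
  rw [Matrix.diagonal_eq_diagonal_iff]
  intro p
  simp [wsum]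

lemma hconj : Sx3 * Vmat = Vmat * Dsum := by
  rw [← hDsum]
  simp only [Sx3, Vmat, add_mul, mul_add, ← Matrix.mul_kronecker_mul, one_mul, mul_one, hXh]

lemma conj_diag (A B C A' B' C' : Matrix (Fin 2) (Fin 2) ℂ)
    (ha : A' * hMat = hMat * A) (hb : B' * hMat = hMat * B) (hc : C' * hMat = hMat * C) :
    Vmat * (A ⊗ₖ (B ⊗ₖ C)) * ((8 : ℂ)⁻¹ • Vmat) = A' ⊗ₖ (B' ⊗ₖ C') := by
  have key : Vmat * (A ⊗ₖ (B ⊗ₖ C)) = (A' ⊗ₖ (B' ⊗ₖ C')) * Vmat := by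
    simp only [Vmat, ← Matrix.mul_kronecker_mul, ha, hb, hc]
  rw [key, mul_assoc, hid, mul_one]

lemma hSx2 : Sx3 * Sx3 = Vmat * (Dsum * Dsum) * ((8 : ℂ)⁻¹ • Vmat) := by
  have h1 : Sx3 * Sx3 * Vmat = Vmat * (Dsum * Dsum) := by
    rw [mul_assoc, hconj, ← mul_assoc, hconj, mul_assoc]
  calc Sx3 * Sx3 = Sx3 * Sx3 * (Vmat * ((8 : ℂ)⁻¹ • Vmat)) := by rw [hid, mul_one]
    _ = Sx3 * Sx3 * Vmat * ((8 : ℂ)⁻¹ • Vmat) := by rw [← mul_assoc]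
    _ = Vmat * (Dsum * Dsum) * ((8 : ℂ)⁻¹ • Vmat) := by rw [h1]

noncomputable def cc : ℂ := -(Complex.I) * (Real.pi / 8)

lemma h9 : Complex.exp (cc * 9) = -Complex.exp cc := by
  have h : cc * 9 = cc + (-(Real.pi * Complex.I)) := by
    simp only [cc]; ring
  rw [h, Complex.exp_add, Complex.exp_neg, Complex.exp_pi_mul_I]
  norm_num

lemma hdiagvals :
    (fun p => Complex.exp (cc * (wsum p * wsum p)))
      = fun p : Fin 2 × (Fin 2 × Fin 2) => Complex.exp cc *
          ((1 - (zfun p.1 * zfun p.2.1 + zfun p.1 * zfun p.2.2 + zfun p.2.1 * zfun p.2.2)) / 2) := by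
  funext p
  obtain ⟨a, b, c⟩ := p
  have h1 : Complex.exp (cc * 1) = Complex.exp cc := by rw [mul_one]
  fin_cases a <;> fin_cases b <;> fin_cases c <;>
    · simp only [wsum, zfun]
      norm_num [h9, h1]

lemma one8_eq_diag : (1 : Matrix (Fin 2 × (Fin 2 × Fin 2)) (Fin 2 × (Fin 2 × Fin 2)) ℂ)
    = diagonal (fun _ => 1) := (Matrix.diagonal_one).symm

lemma UX2_eq : UX2 = Complex.exp cc • ((2:ℂ)⁻¹ •
    ((1 : Matrix (Fin 2 × (Fin 2 × Fin 2)) (Fin 2 × (Fin 2 × Fin 2)) ℂ)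
      - PX ⊗ₖ (PX ⊗ₖ 1) - PX ⊗ₖ (1 ⊗ₖ PX)
      - (1 : Matrix (Fin 2) (Fin 2) ℂ) ⊗ₖ (PX ⊗ₖ PX))) := by
  have hD2 : cc • (Dsum * Dsum) = diagonal (fun p => cc * (wsum p * wsum p)) := by
    rw [Dsum, Matrix.diagonal_mul_diagonal, ← Matrix.diagonal_smul,
      Matrix.diagonal_eq_diagonal_iff]
    intro p
    simp
  have hVuinv : (↑Vu⁻¹ : Matrix (Fin 2 × (Fin 2 × Fin 2)) (Fin 2 × (Fin 2 × Fin 2)) ℂ)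
      = (8 : ℂ)⁻¹ • Vmat := rfl
  have hVuval : (Vu : Matrix (Fin 2 × (Fin 2 × Fin 2)) (Fin 2 × (Fin 2 × Fin 2)) ℂ) = Vmat := rfl
  have hsmul : cc • (Sx3 * Sx3) = (Vu : Matrix _ _ ℂ)
      * diagonal (fun p => cc * (wsum p * wsum p)) * (↑Vu⁻¹ : Matrix _ _ ℂ) := by
    rw [hSx2, ← hD2, hVuinv, hVuval]
    simp only [mul_smul_comm, smul_mul_assoc]
    rw [smul_comm]
  have hpi : (NormedSpace.exp fun p : Fin 2 × (Fin 2 × Fin 2) => cc * (wsum p * wsum p))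
      = fun p => Complex.exp (cc * (wsum p * wsum p)) := by
    rw [Pi.exp_def]
    funext p
    rw [Complex.exp_eq_exp_ℂ]
  have hexp : UX2 = Vmat * diagonal (fun p => Complex.exp (cc * (wsum p * wsum p)))
      * ((8 : ℂ)⁻¹ • Vmat) := by
    rw [UX2, show (-(Complex.I) * ((Real.pi : ℂ) / 8)) = cc from rfl, hsmul,
      Matrix.exp_units_conj, Matrix.exp_diagonal, hpi, hVuinv, hVuval]
  have hdg : diagonal (fun p : Fin 2 × (Fin 2 × Fin 2) => Complex.exp cc *
        ((1 - (zfun p.1 * zfun p.2.1 + zfun p.1 * zfun p.2.2 + zfun p.2.1 * zfun p.2.2)) / 2))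
      = Complex.exp cc • ((2:ℂ)⁻¹ •
        ((1 : Matrix (Fin 2 × (Fin 2 × Fin 2)) (Fin 2 × (Fin 2 × Fin 2)) ℂ)
          - Dz ⊗ₖ (Dz ⊗ₖ 1) - Dz ⊗ₖ (1 ⊗ₖ Dz)
          - (1 : Matrix (Fin 2) (Fin 2) ℂ) ⊗ₖ (Dz ⊗ₖ Dz))) := by
    rw [one_eq_diag, one8_eq_diag]
    simp only [Dz, kron3_diag, Matrix.diagonal_sub, ← Matrix.diagonal_smul,
      Matrix.diagonal_eq_diagonal_iff]
    intro p
    simp only [Pi.smul_apply, Pi.sub_apply, Pi.one_apply, smul_eq_mul]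
    ring
  have e0 : Vmat * ((1 : Matrix (Fin 2 × (Fin 2 × Fin 2)) (Fin 2 × (Fin 2 × Fin 2)) ℂ))
      * ((8 : ℂ)⁻¹ • Vmat) = 1 := by rw [mul_one, hid]
  have e1 := conj_diag Dz Dz 1 PX PX 1 hXh hXh (by rw [one_mul, mul_one])
  have e2 := conj_diag Dz 1 Dz PX 1 PX hXh (by rw [one_mul, mul_one]) hXh
  have e3 := conj_diag 1 Dz Dz 1 PX PX (by rw [one_mul, mul_one]) hXh hXh
  have hmove : ∀ M : Matrix (Fin 2 × (Fin 2 × Fin 2)) (Fin 2 × (Fin 2 × Fin 2)) ℂ,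
      Vmat * (Complex.exp cc • (2:ℂ)⁻¹ • M) * ((8:ℂ)⁻¹ • Vmat)
        = Complex.exp cc • (2:ℂ)⁻¹ • (Vmat * M * ((8:ℂ)⁻¹ • Vmat)) := by
    intro M
    simp only [mul_smul_comm, smul_mul_assoc, smul_smul]
    congr 1
    ring
  rw [hexp, hdiagvals, hdg, hmove]
  congr 2
  simp only [mul_sub, sub_mul]
  rw [e0, e1, e2, e3]

lemma mXm : MX * ProjXm = 1 - PX ⊗ₖ PX := by
  ext p q
  obtain ⟨a, b⟩ := p; obtain ⟨c, d⟩ := q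
  fin_cases a <;> fin_cases b <;> fin_cases c <;> fin_cases d <;>
    norm_num [MX, ProjXm, PX, Matrix.mul_apply, Fintype.sum_prod_type, Fin.sum_univ_two,
      Matrix.one_apply, Prod.ext_iff]

lemma mXp : MX * ProjXp
    = -(PX ⊗ₖ (1 : Matrix (Fin 2) (Fin 2) ℂ) + (1 : Matrix (Fin 2) (Fin 2) ℂ) ⊗ₖ PX) := by
  ext p q
  obtain ⟨a, b⟩ := p; obtain ⟨c, d⟩ := q
  fin_cases a <;> fin_cases b <;> fin_cases c <;> fin_cases d <;>
    norm_num [MX, ProjXp, PX, Matrix.mul_apply, Fintype.sum_prod_type, Fin.sum_univ_two,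
      Matrix.one_apply, Prod.ext_iff]

lemma one_kron_one3 : ((1 : Matrix (Fin 2) (Fin 2) ℂ)
      ⊗ₖ (1 : Matrix (Fin 2 × Fin 2) (Fin 2 × Fin 2) ℂ))
    = (1 : Matrix (Fin 2 × (Fin 2 × Fin 2)) (Fin 2 × (Fin 2 × Fin 2)) ℂ) :=
  Matrix.one_kronecker_one

lemma kron_neg_right (A : Matrix (Fin 2) (Fin 2) ℂ)
    (B : Matrix (Fin 2 × Fin 2) (Fin 2 × Fin 2) ℂ) : A ⊗ₖ (-B) = -(A ⊗ₖ B) := by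
  rw [← neg_one_smul ℂ B, Matrix.kronecker_smul, neg_one_smul]

lemma kron_sub_right (A : Matrix (Fin 2) (Fin 2) ℂ)
    (B C : Matrix (Fin 2 × Fin 2) (Fin 2 × Fin 2) ℂ) :
    A ⊗ₖ (B - C) = A ⊗ₖ B - A ⊗ₖ C := by
  rw [sub_eq_add_neg, Matrix.kronecker_add, kron_neg_right, ← sub_eq_add_neg]

/-- Decomposition of the Mølmer–Sørensen gate `U_{X²}(π/2)` into a residual local
unitary `I₂ ⊗ U''_X` and the conditional gate `C^X_out = I₂ ⊗ Π₋ + X ⊗ Π₊`. -/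
theorem MS_gate_X_decomposition :
    UX2 = ((1 : Matrix (Fin 2) (Fin 2) ℂ) ⊗ₖ UX'') *
      ((1 : Matrix (Fin 2) (Fin 2) ℂ) ⊗ₖ ProjXm + PX ⊗ₖ ProjXp) := by
  rw [UX2_eq]
  rw [mul_add, ← Matrix.mul_kronecker_mul, ← Matrix.mul_kronecker_mul]
  simp only [one_mul, mul_one]
  have hm : UX'' * ProjXm = ((2 : ℂ)⁻¹ * Complex.exp cc) • (MX * ProjXm) := by
    rw [UX'', Matrix.smul_mul]; rfl
  have hp : UX'' * ProjXp = ((2 : ℂ)⁻¹ * Complex.exp cc) • (MX * ProjXp) := by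
    rw [UX'', Matrix.smul_mul]; rfl
  rw [hm, hp, mXm, mXp]
  rw [Matrix.kronecker_smul, Matrix.kronecker_smul, ← smul_add, smul_smul,
    show Complex.exp cc * (2:ℂ)⁻¹ = (2:ℂ)⁻¹ * Complex.exp cc from mul_comm _ _]
  congr 1
  simp only [kron_sub_right, kron_neg_right, Matrix.kronecker_add, one_kron_one3]
  abel
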